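/- Let p ≤ n be positive integers, let G, M ∈ ℍ^{n×n} be Hermitian positive definite (so M is invertible), and let X ∈ ℍ^{n×p} satisfy XᴴGX = I_p. Then every Y ∈ ℍ^{n×p} admits a unique decomposition Y = Z + M⁻¹GXS where Z ∈ ℍ^{n×p} satisfies ZᴴGX + XᴴGZ = 0 and S ∈ ℍ^{p×p} is Hermitian. -/

import Mathlib

open Matrix
open scoped Quaternion

private lemma re_sum' {ι : Type*} (s : Finset ι) (f : ι → ℍ[ℝ]) :
    (∑ i ∈ s, f i).re = ∑ i ∈ s, (f i).re :=
  map_sum (QuaternionAlgebra.reₗ (-1 : ℝ) (0 : ℝ) (-1 : ℝ)) f s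

private lemma re_mul_comm' (a b : ℍ[ℝ]) : (a * b).re = (b * a).re := by
  rw [Quaternion.re_mul, Quaternion.re_mul]; ring

private lemma re_trace_mul_comm' {m p : ℕ} (A : Matrix (Fin m) (Fin p) ℍ[ℝ])
    (B : Matrix (Fin p) (Fin m) ℍ[ℝ]) :
    ((A * B).trace).re = ((B * A).trace).re := by
  simp only [Matrix.trace, Matrix.diag, Matrix.mul_apply, re_sum']
  rw [Finset.sum_comm]
  exact Finset.sum_congr rfl fun k _ => Finset.sum_congr rfl fun i _ => re_mul_comm' _ _

private lemma quad_conj' {n m : ℕ} (B : Matrix (Fin n) (Fin m) ℍ[ℝ])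
    (N : Matrix (Fin n) (Fin n) ℍ[ℝ]) (x : Fin m → ℍ[ℝ]) :
    star x ⬝ᵥ (Bᴴ * N * B) *ᵥ x = star (B *ᵥ x) ⬝ᵥ N *ᵥ (B *ᵥ x) := by
  rw [Matrix.mul_assoc, ← Matrix.mulVec_mulVec, Matrix.dotProduct_mulVec, ← Matrix.star_mulVec,
    Matrix.mulVec_mulVec]

private lemma diag_entry' {n p : ℕ} (A : Matrix (Fin n) (Fin n) ℍ[ℝ])
    (S : Matrix (Fin n) (Fin p) ℍ[ℝ]) (j : Fin p) :
    (Sᴴ * A * S) j j = star (fun i => S i j) ⬝ᵥ A *ᵥ (fun i => S i j) := by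
  simp only [Matrix.mul_apply, dotProduct, Matrix.mulVec, Matrix.conjTranspose_apply,
    Finset.sum_mul, Finset.mul_sum, Pi.star_apply]
  rw [Finset.sum_comm]
  simp [mul_assoc]

private lemma trace_quad_pos' {n p : ℕ} (A : Matrix (Fin n) (Fin n) ℍ[ℝ])
    (hA : ∀ x : Fin n → ℍ[ℝ], x ≠ 0 → 0 < (star x ⬝ᵥ A *ᵥ x).re)
    (S : Matrix (Fin n) (Fin p) ℍ[ℝ]) (hS : S ≠ 0) :
    0 < ((Sᴴ * A * S).trace).re := by
  have hcol : ∃ j : Fin p, (fun i => S i j) ≠ 0 := by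
    by_contra h
    push_neg at h
    exact hS (Matrix.ext fun i j => congrFun (h j) i)
  obtain ⟨j0, hj0⟩ := hcol
  rw [Matrix.trace, re_sum']
  apply Finset.sum_pos'
  · intro j _
    rcases eq_or_ne (fun i => S i j) 0 with h | h
    · simp [Matrix.diag, diag_entry', h]
    · exact le_of_lt (by rw [Matrix.diag, diag_entry']; exact hA _ h)
  · exact ⟨j0, Finset.mem_univ _, by rw [Matrix.diag, diag_entry']; exact hA _ hj0⟩

/-- Every `Y ∈ ℍ^{n×p}` decomposes uniquely as `Y = Z + M⁻¹GXS` with `Z` in the tangent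
space at `X` (i.e. `ZᴴGX + XᴴGZ = 0`) and `S ∈ ℍ^{p×p}` Hermitian. -/
theorem tangent_normal_decomposition_generalized_quaternionic_stiefel
    (n p : ℕ) (hp : 0 < p) (hpn : p ≤ n)
    (G M : Matrix (Fin n) (Fin n) ℍ[ℝ]) (hG : Gᴴ = G) (hM : Mᴴ = M)
    (hGpd : ∀ x : Fin n → ℍ[ℝ], x ≠ 0 → 0 < (star x ⬝ᵥ G *ᵥ x).re)
    (hMpd : ∀ x : Fin n → ℍ[ℝ], x ≠ 0 → 0 < (star x ⬝ᵥ M *ᵥ x).re)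
    [Invertible M]
    (X : Matrix (Fin n) (Fin p) ℍ[ℝ]) (hX : Xᴴ * G * X = 1)
    (Y : Matrix (Fin n) (Fin p) ℍ[ℝ]) :
    ∃! ZS : Matrix (Fin n) (Fin p) ℍ[ℝ] × Matrix (Fin p) (Fin p) ℍ[ℝ],
      Y = ZS.1 + ⅟M * G * X * ZS.2 ∧
        ZS.1ᴴ * G * X + Xᴴ * G * ZS.1 = 0 ∧ ZS.2ᴴ = ZS.2 := by
  -- ⅟M is Hermitian
  have hMinv : (⅟M)ᴴ = ⅟M := by
    symm
    apply invOf_eq_right_inv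
    calc M * (⅟M)ᴴ = (⅟M * M)ᴴ := by rw [Matrix.conjTranspose_mul, hM]
    _ = 1 := by rw [invOf_mul_self]; exact Matrix.conjTranspose_one
  -- ⅟M is positive definite
  have hMinvpd : ∀ v : Fin n → ℍ[ℝ], v ≠ 0 → 0 < (star v ⬝ᵥ ⅟M *ᵥ v).re := by
    intro v hv
    set w := ⅟M *ᵥ v with hw
    have hvw : M *ᵥ w = v := by rw [hw, Matrix.mulVec_mulVec, mul_invOf_self, Matrix.one_mulVec]
    have hw0 : w ≠ 0 := by
      intro h
      apply hv
      rw [← hvw, h, Matrix.mulVec_zero]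
    have : star v ⬝ᵥ w = star w ⬝ᵥ M *ᵥ w := by
      conv_lhs => rw [← hvw]
      rw [Matrix.star_mulVec, hM, ← Matrix.dotProduct_mulVec]
    rw [this]
    exact hMpd w hw0
  set A := Xᴴ * G * ⅟M * G * X with hA
  -- A is Hermitian
  have hAh : Aᴴ = A := by
    rw [hA]
    simp only [Matrix.conjTranspose_mul, Matrix.conjTranspose_conjTranspose, hG, hMinv]
    simp only [Matrix.mul_assoc]
  -- A as conjugation form
  have hAform : A = (G * X)ᴴ * ⅟M * (G * X) := by
    rw [hA, Matrix.conjTranspose_mul, hG]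
    simp only [Matrix.mul_assoc]
  -- A is positive definite
  have hApd : ∀ x : Fin p → ℍ[ℝ], x ≠ 0 → 0 < (star x ⬝ᵥ A *ᵥ x).re := by
    intro x hx
    have hv0 : (G * X) *ᵥ x ≠ 0 := by
      intro h
      apply hx
      have : (Xᴴ * (G * X)) *ᵥ x = x := by rw [← Matrix.mul_assoc, hX, Matrix.one_mulVec]
      rw [← this, ← Matrix.mulVec_mulVec, h, Matrix.mulVec_zero]
    rw [hAform, quad_conj']
    exact hMinvpd _ hv0
  -- The Lyapunov operator
  set L : Matrix (Fin p) (Fin p) ℍ[ℝ] →ₗ[ℝ] Matrix (Fin p) (Fin p) ℍ[ℝ] :=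
    { toFun := fun S => S * A + A * S
      map_add' := fun S T => by noncomm_ring
      map_smul' := fun r S => by
        simp only [RingHom.id_apply, Matrix.smul_mul, Matrix.mul_smul, smul_add] } with hL
  have hLapp : ∀ S, L S = S * A + A * S := fun S => rfl
  -- L is injective
  have hker : ∀ S, L S = 0 → S = 0 := by
    intro S h
    by_contra hS0
    have hSne : Sᴴ ≠ 0 := fun hc => hS0 (by
      have := congrArg Matrix.conjTranspose hc
      rwa [Matrix.conjTranspose_conjTranspose, Matrix.conjTranspose_zero] at this)
    have h1 : 0 < ((Sᴴ * A * S).trace).re := trace_quad_pos' A hApd S hS0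
    have h2 : 0 < ((S * A * Sᴴ).trace).re := by
      have := trace_quad_pos' A hApd Sᴴ hSne
      rwa [Matrix.conjTranspose_conjTranspose] at this
    have h3 : ((Sᴴ * (S * A)).trace).re = ((S * A * Sᴴ).trace).re :=
      re_trace_mul_comm' Sᴴ (S * A)
    have h4 : ((Sᴴ * (S * A + A * S)).trace).re = 0 := by
      rw [hLapp] at h
      rw [h, mul_zero, Matrix.trace_zero]; rfl
    rw [mul_add, Matrix.trace_add] at h4
    rw [Quaternion.re_add, h3] at h4
    have h5 : ((Sᴴ * (A * S)).trace).re = ((Sᴴ * A * S).trace).re := by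
      rw [mul_assoc]
    rw [h5] at h4
    linarith
  have hinj : Function.Injective L := by
    intro a b hab
    have : L (a - b) = 0 := by rw [map_sub, hab, sub_self]
    have := hker _ this
    exact sub_eq_zero.mp this
  have hsurj : Function.Surjective L := LinearMap.injective_iff_surjective.mp hinj
  set C := Yᴴ * G * X + Xᴴ * G * Y with hC
  have hCh : Cᴴ = C := by
    rw [hC]
    simp only [Matrix.conjTranspose_add, Matrix.conjTranspose_mul,
      Matrix.conjTranspose_conjTranspose, hG]
    rw [add_comm]
    simp only [Matrix.mul_assoc]
  obtain ⟨S, hS⟩ := hsurj C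
  rw [hLapp] at hS
  -- S is Hermitian
  have hSh : Sᴴ = S := by
    apply hinj
    rw [hLapp, hLapp, hS]
    calc Sᴴ * A + A * Sᴴ = (S * A + A * S)ᴴ := by
          simp only [Matrix.conjTranspose_add, Matrix.conjTranspose_mul, hAh]
          rw [add_comm]
    _ = Cᴴ := by rw [hS]
    _ = C := hCh
  set N := ⅟M * G * X * S with hN
  have hkey1 : Nᴴ * G * X = S * A := by
    rw [hN]
    simp only [Matrix.conjTranspose_mul, hG, hMinv, hSh]
    rw [hA]
    simp only [Matrix.mul_assoc]
  have hkey2 : Xᴴ * G * N = A * S := by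
    rw [hN, hA]
    simp only [Matrix.mul_assoc]
  refine ⟨(Y - N, S), ⟨by rw [← hN, sub_add_cancel], ?_, hSh⟩, ?_⟩
  · show (Y - N)ᴴ * G * X + Xᴴ * G * (Y - N) = 0
    rw [Matrix.conjTranspose_sub, Matrix.sub_mul, Matrix.sub_mul, Matrix.mul_sub,
      hkey1, hkey2, sub_add_sub_comm, ← hC, hS, sub_self]
  · rintro ⟨Z', S'⟩ ⟨hY', htan', hS'h⟩
    simp only at hY' htan' hS'h
    set N' := ⅟M * G * X * S' with hN'
    have hkey1' : N'ᴴ * G * X = S' * A := by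
      rw [hN']
      simp only [Matrix.conjTranspose_mul, hG, hMinv, hS'h]
      rw [hA]
      simp only [Matrix.mul_assoc]
    have hkey2' : Xᴴ * G * N' = A * S' := by
      rw [hN', hA]
      simp only [Matrix.mul_assoc]
    have hCS' : S' * A + A * S' = C := by
      rw [hC, hY']
      rw [Matrix.conjTranspose_add, Matrix.add_mul, Matrix.add_mul, Matrix.mul_add,
        hkey1', hkey2', add_add_add_comm, htan', zero_add]
    have hSS : S' = S := hinj (by rw [hLapp, hLapp, hS, hCS'])
    have hZZ : Z' = Y - N := by
      have hNN : N' = N := by rw [hN', hSS, ← hN]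
      rw [hY', hNN]
      abel
    rw [Prod.ext_iff]
    exact ⟨hZZ, hSS⟩
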